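/- The behavior policy μ* reduces the total variance of the PDIS estimator compared with on-policy evaluation: for every initial state distribution p_0 on 𝒮, Var(G^PDIS(τ^{μ*_{0:T−1}}_{0:T−1})) ≤ Var(G^PDIS(τ^{π_{0:T−1}}_{0:T−1})), where both variances include the randomness of S_0 ∼ p_0 and of the respective trajectory distributions. -/

import Mathlib

open Finset

section MDPDefs

variable {S A : Type} [Fintype S] [Fintype A]

/-- State value `v_{π,t}(s)` of policy `π` for reward `r`, with `n` remaining steps at
time `t`; the paper's `v_{π,t}(s)` (horizon `T`) is `vval p r π (T − t) t s`. -/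
noncomputable def vval (p : S → A → S → ℝ) (r : S → A → ℝ) (π : ℕ → S → A → ℝ) :
    ℕ → ℕ → S → ℝ
  | 0, _, _ => 0
  | n + 1, t, s => ∑ a, π t s a * (r s a + ∑ s', p s a s' * vval p r π n (t + 1) s')

/-- Action value `q_{π,t}(s,a) = r(s,a) + ∑_{s'} p(s'|s,a) v_{π,t+1}(s')`, where `n`
steps remain after the current one; the paper's `q_{π,t}` is `qval p r π (T − t − 1) t`. -/
noncomputable def qval (p : S → A → S → ℝ) (r : S → A → ℝ) (π : ℕ → S → A → ℝ)
    (n t : ℕ) (s : S) (a : A) : ℝ :=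
  r s a + ∑ s', p s a s' * vval p r π n (t + 1) s'

/-- `ν_{π,t}(s,a) = Var_{s' ∼ p(·|s,a)}(v_{π,t+1}(s'))`, with `n = T − t − 1`
remaining steps after the current one (in particular `ν_{π,T−1} ≡ 0` since `v_{π,T} ≡ 0`). -/
noncomputable def nuVar (p : S → A → S → ℝ) (r : S → A → ℝ) (π : ℕ → S → A → ℝ)
    (n t : ℕ) (s : S) (a : A) : ℝ :=
  (∑ s', p s a s' * (vval p r π n (t + 1) s') ^ 2)
    - (∑ s', p s a s' * vval p r π n (t + 1) s') ^ 2

/-- Probability, under behavior policy `μ`, of the trajectory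
`τ = (A_t, S_{t+1}, A_{t+1}, …, S_{t+n})` of `n` steps starting from state `s` at
time `t`: actions `A_k ∼ μ_k(·|S_k)` and states `S_{k+1} ∼ p(·|S_k, A_k)`. -/
noncomputable def trajProb (p : S → A → S → ℝ) (μ : ℕ → S → A → ℝ) :
    (n : ℕ) → ℕ → S → (Fin n → A × S) → ℝ
  | 0, _, _, _ => 1
  | n + 1, t, s, τ =>
      μ t s (τ 0).1 * p s (τ 0).1 (τ 0).2 *
        trajProb p μ n (t + 1) (τ 0).2 (fun i => τ i.succ)

/-- PDIS return `G^PDIS(τ^{μ_{t:t+n−1}}_{t:t+n−1}) = ∑_{k=t}^{t+n−1} (∏_{j=t}^{k} ρ_j) R_{k+1}`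
(in its equivalent recursive form) along trajectory `τ` from state `s` at time `t`,
where `ρ_j = π_j(A_j|S_j)/μ_j(A_j|S_j)` and `R_{k+1} = r(S_k, A_k)`. -/
noncomputable def pdis (r : S → A → ℝ) (π μ : ℕ → S → A → ℝ) :
    (n : ℕ) → ℕ → S → (Fin n → A × S) → ℝ
  | 0, _, _, _ => 0
  | n + 1, t, s, τ =>
      π t s (τ 0).1 / μ t s (τ 0).1 *
        (r s (τ 0).1 + pdis r π μ n (t + 1) (τ 0).2 (fun i => τ i.succ))

/-- Conditional expectation `E[f(τ) | S_t = s]` over `n`-step trajectories generated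
by the behavior policy `μ` from state `s` at time `t`. -/
noncomputable def expTraj (p : S → A → S → ℝ) (μ : ℕ → S → A → ℝ) (n t : ℕ) (s : S)
    (f : (Fin n → A × S) → ℝ) : ℝ :=
  ∑ τ : Fin n → A × S, trajProb p μ n t s τ * f τ

/-- Conditional variance `Var(G^PDIS(τ^{μ_{t:T−1}}_{t:T−1}) | S_t = s)` with
`n = T − t` remaining steps. -/
noncomputable def pdisVar (p : S → A → S → ℝ) (r : S → A → ℝ) (π μ : ℕ → S → A → ℝ)
    (n t : ℕ) (s : S) : ℝ :=
  expTraj p μ n t s (fun τ => (pdis r π μ n t s τ) ^ 2)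
    - (expTraj p μ n t s (pdis r π μ n t s)) ^ 2

/-- Conditional variance `Var(G^PDIS(τ^{μ_{t+1:T−1}}_{t+1:T−1}) | S_t = s, A_t = a)`,
where `S_{t+1} ∼ p(·|s,a)` and then the trajectory is generated by `μ` from `S_{t+1}`;
here `n = T − t − 1`. -/
noncomputable def pdisVarSA (p : S → A → S → ℝ) (r : S → A → ℝ) (π μ : ℕ → S → A → ℝ)
    (n t : ℕ) (s : S) (a : A) : ℝ :=
  (∑ s', p s a s' * expTraj p μ n (t + 1) s' (fun τ => (pdis r π μ n (t + 1) s' τ) ^ 2))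
    - (∑ s', p s a s' * expTraj p μ n (t + 1) s' (pdis r π μ n (t + 1) s')) ^ 2

/-- Extended reward `r̃_t(s,a)` (horizon `T`) computed with continuation behavior
policy `μ`: `r̃_{T−1}(s,a) = r(s,a)²`, and for `t ≤ T−2`,
`r̃_t(s,a) = ν_{π,t}(s,a) + q_{π,t}(s,a)² + ∑_{s'} p(s'|s,a) Var(G^PDIS(τ^{μ_{t+1:T−1}}) | S_{t+1} = s')`. -/
noncomputable def rtilde (p : S → A → S → ℝ) (r : S → A → ℝ) (π μ : ℕ → S → A → ℝ)
    (T t : ℕ) (s : S) (a : A) : ℝ :=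
  if t + 1 = T then (r s a) ^ 2
  else
    nuVar p r π (T - t - 1) t s a + (qval p r π (T - t - 1) t s a) ^ 2
      + ∑ s', p s a s' * pdisVar p r π μ (T - t - 1) (t + 1) s'

/-- Total (unconditional) variance `Var(G^PDIS(τ^{μ_{0:T−1}}_{0:T−1}))` of the PDIS
estimator, including the randomness of the initial state `S_0 ∼ p0`. -/
noncomputable def pdisTotalVar (p : S → A → S → ℝ) (r : S → A → ℝ) (π μ : ℕ → S → A → ℝ)
    (p0 : S → ℝ) (T : ℕ) : ℝ :=
  (∑ s, p0 s * expTraj p μ T 0 s (fun τ => (pdis r π μ T 0 s τ) ^ 2))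
    - (∑ s, p0 s * expTraj p μ T 0 s (pdis r π μ T 0 s)) ^ 2

/-- Feasible set of the step-wise constrained problem at time `t` and state `s`:
probability distributions `ν` on `A` satisfying the coverage condition
`ν a = 0 → π_t(a|s) q_{π,t}(s,a) = 0` and the safety constraint
`∑ a, ν a * q^c_{μ*,t}(s,a) ≤ (1 + ε) v^c_{π,t}(s)`. -/
noncomputable def stepFeasible (p : S → A → S → ℝ) (r c : S → A → ℝ)
    (π μstar : ℕ → S → A → ℝ) (T : ℕ) (ε : ℝ) (t : ℕ) (s : S) : Set (A → ℝ) :=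
  {ν | (∀ a, 0 ≤ ν a) ∧ (∑ a, ν a) = 1 ∧
    (∀ a, ν a = 0 → π t s a * qval p r π (T - t - 1) t s a = 0) ∧
    (∑ a, ν a * qval p c μstar (T - t - 1) t s a) ≤ (1 + ε) * vval p c π (T - t) t s}

/-- Objective `∑_{a : ν a > 0} π_t(a|s)² r̃_t(s,a) / ν a` of the step-wise constrained
problem at time `t` and state `s`, where `r̃_t` is computed with continuation policy
`μ*_{t+1:T−1}`. -/
noncomputable def stepObj (p : S → A → S → ℝ) (r : S → A → ℝ) (π μstar : ℕ → S → A → ℝ)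
    (T t : ℕ) (s : S) (ν : A → ℝ) : ℝ :=
  ∑ a ∈ Finset.univ.filter (fun a => 0 < ν a),
    (π t s a) ^ 2 * rtilde p r π μstar T t s a / ν a

end MDPDefs

section Proofs

variable {S A : Type} [Fintype S] [Fintype A]
variable (p : S → A → S → ℝ) (r : S → A → ℝ) (π μ : ℕ → S → A → ℝ)

lemma vval_succ (n t : ℕ) (s : S) :
    vval p r π (n + 1) t s = ∑ a, π t s a * qval p r π n t s a := rfl

lemma expTraj_zero (t : ℕ) (s : S) (f : (Fin 0 → A × S) → ℝ) :
    expTraj p μ 0 t s f = f default := by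
  simp [expTraj, trajProb]

lemma expTraj_succ (n t : ℕ) (s : S) (f : (Fin (n + 1) → A × S) → ℝ) :
    expTraj p μ (n + 1) t s f
      = ∑ a, ∑ s', μ t s a * p s a s' *
          expTraj p μ n (t + 1) s' (fun τ => f (Fin.cons (a, s') τ)) := by
  classical
  rw [expTraj, ← (Fin.consEquiv (fun _ : Fin (n+1) => A × S)).sum_comp
      (fun τ => trajProb p μ (n+1) t s τ * f τ), Fintype.sum_prod_type]
  rw [Fintype.sum_prod_type]
  refine Finset.sum_congr rfl fun a _ => Finset.sum_congr rfl fun s' _ => ?_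
  rw [expTraj, Finset.mul_sum]
  refine Finset.sum_congr rfl fun τ _ => ?_
  show (trajProb p μ (n+1) t s (Fin.cons (a,s') τ)) * f (Fin.cons (a,s') τ) = _
  simp only [trajProb, Fin.cons_zero, Fin.cons_succ]
  ring

lemma expTraj_affine (n t : ℕ) (s : S) (k c : ℝ) (g : (Fin n → A × S) → ℝ) :
    expTraj p μ n t s (fun τ => k * (c + g τ))
      = k * (c * expTraj p μ n t s (fun _ => 1) + expTraj p μ n t s g) := by
  simp only [expTraj, Finset.mul_sum, ← Finset.sum_add_distrib]
  exact Finset.sum_congr rfl fun τ _ => by ring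

lemma expTraj_sq_expand (n t : ℕ) (s : S) (k c : ℝ) (g : (Fin n → A × S) → ℝ) :
    expTraj p μ n t s (fun τ => (k * (c + g τ)) ^ 2)
      = k ^ 2 * (c ^ 2 * expTraj p μ n t s (fun _ => 1)
          + 2 * c * expTraj p μ n t s g
          + expTraj p μ n t s (fun τ => (g τ) ^ 2)) := by
  simp only [expTraj, Finset.mul_sum, ← Finset.sum_add_distrib]
  exact Finset.sum_congr rfl fun τ _ => by ring

lemma expTraj_one (hp : ∀ s a, (∀ s', 0 ≤ p s a s') ∧ (∑ s', p s a s') = 1) :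
    ∀ (n t : ℕ), (∀ u, t ≤ u → u < t + n → ∀ s', ∑ a, μ u s' a = 1) → ∀ (s : S),
      expTraj p μ n t s (fun _ => 1) = 1 := by
  intro n
  induction n with
  | zero => intro t _ s; rw [expTraj_zero]
  | succ n ih =>
      intro t h s
      rw [expTraj_succ]
      have hin : ∀ s' : S, expTraj p μ n (t + 1) s' (fun _ => (1:ℝ)) = 1 :=
        fun s' => ih (t + 1) (fun u hu1 hu2 s'' => h u (by omega) (by omega) s'') s'
      have : ∀ a : A, ∑ s', μ t s a * p s a s'
          * expTraj p μ n (t + 1) s' (fun _ => (1:ℝ)) = μ t s a := by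
        intro a
        simp only [hin, mul_one, ← Finset.mul_sum, (hp s a).2]
      rw [Finset.sum_congr rfl fun a _ => this a]
      exact h t le_rfl (by omega) s

lemma pdis_cons (n t : ℕ) (s s' : S) (a : A) (τ : Fin n → A × S) :
    pdis r π μ (n + 1) t s (Fin.cons (a, s') τ)
      = π t s a / μ t s a * (r s a + pdis r π μ n (t + 1) s' τ) := by
  simp only [pdis, Fin.cons_zero, Fin.cons_succ]

lemma expTraj_pdis (hp : ∀ s a, (∀ s', 0 ≤ p s a s') ∧ (∑ s', p s a s') = 1)
    (T : ℕ)
    (hμ1 : ∀ t, t < T → ∀ s, ∑ a, μ t s a = 1)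
    (hcov : ∀ t, t < T → ∀ s a, μ t s a = 0 →
      π t s a * qval p r π (T - t - 1) t s a = 0) :
    ∀ n, n ≤ T → ∀ s : S,
      expTraj p μ n (T - n) s (pdis r π μ n (T - n) s) = vval p r π n (T - n) s := by
  intro n
  induction n with
  | zero => intro _ s; rw [expTraj_zero]; rfl
  | succ n ih =>
      intro hn s
      have htT : T - (n + 1) < T := by omega
      have ht1 : T - (n + 1) + 1 = T - n := by omega
      have htn : T - (T - (n + 1)) - 1 = n := by omega
      set t := T - (n + 1) with htdef
      rw [expTraj_succ]
      have hstep : ∀ (a : A) (s' : S),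
          expTraj p μ n (t + 1) s'
            (fun τ => pdis r π μ (n + 1) t s (Fin.cons (a, s') τ))
          = π t s a / μ t s a * (r s a + vval p r π n (t + 1) s') := by
        intro a s'
        have h1 : (fun τ => pdis r π μ (n + 1) t s (Fin.cons (a, s') τ))
            = fun τ => π t s a / μ t s a * (r s a + pdis r π μ n (t + 1) s' τ) := by
          funext τ; exact pdis_cons r π μ n t s s' a τ
        rw [h1, expTraj_affine, expTraj_one p μ hp n (t + 1)
          (fun u hu1 hu2 s'' => hμ1 u (by omega) s''), mul_one]
        rw [ht1, ih (by omega) s']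
      simp only [hstep]
      have key : ∀ a : A, ∑ s', μ t s a * p s a s' *
          (π t s a / μ t s a * (r s a + vval p r π n (t + 1) s'))
          = π t s a * qval p r π n t s a := by
        intro a
        have expand : ∑ s', μ t s a * p s a s' *
            (π t s a / μ t s a * (r s a + vval p r π n (t + 1) s'))
            = μ t s a * (π t s a / μ t s a) * r s a * (∑ s', p s a s')
              + μ t s a * (π t s a / μ t s a) *
                (∑ s', p s a s' * vval p r π n (t + 1) s') := by
          rw [Finset.mul_sum, Finset.mul_sum, ← Finset.sum_add_distrib]
          exact Finset.sum_congr rfl fun s' _ => by ring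
        rw [expand, (hp s a).2, mul_one]
        have hq : qval p r π n t s a
            = r s a + ∑ s', p s a s' * vval p r π n (t + 1) s' := rfl
        rcases eq_or_ne (μ t s a) 0 with h0 | h0
        · have hz := hcov t htT s a h0
          rw [htn] at hz
          rw [h0]
          simpa using hz.symm
        · rw [hq]; field_simp
      rw [Finset.sum_congr rfl fun a _ => key a, ← vval_succ]

lemma expTraj_pdis_sq (hp : ∀ s a, (∀ s', 0 ≤ p s a s') ∧ (∑ s', p s a s') = 1)
    (T : ℕ)
    (hμ0 : ∀ t, t < T → ∀ s a, 0 ≤ μ t s a)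
    (hμ1 : ∀ t, t < T → ∀ s, ∑ a, μ t s a = 1)
    (hcov : ∀ t, t < T → ∀ s a, μ t s a = 0 →
      π t s a * qval p r π (T - t - 1) t s a = 0) :
    ∀ n, n + 1 ≤ T → ∀ s : S,
      expTraj p μ (n + 1) (T - (n + 1)) s
        (fun τ => (pdis r π μ (n + 1) (T - (n + 1)) s τ) ^ 2)
      = stepObj p r π μ T (T - (n + 1)) s (μ (T - (n + 1)) s) := by
  intro n hn s
  have htT : T - (n + 1) < T := by omega
  have ht1 : T - (n + 1) + 1 = T - n := by omega
  have htn : T - (T - (n + 1)) - 1 = n := by omega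
  set t := T - (n + 1) with htdef
  have hub : ∀ s' : S, expTraj p μ n (t + 1) s' (pdis r π μ n (t + 1) s')
      = vval p r π n (t + 1) s' := by
    intro s'
    rw [ht1]
    exact expTraj_pdis p r π μ hp T hμ1 hcov n (by omega) s'
  rw [expTraj_succ]
  have hstep : ∀ (a : A) (s' : S),
      expTraj p μ n (t + 1) s'
        (fun τ => (pdis r π μ (n + 1) t s (Fin.cons (a, s') τ)) ^ 2)
      = (π t s a / μ t s a) ^ 2 *
          ((r s a) ^ 2 + 2 * r s a * vval p r π n (t + 1) s'
            + expTraj p μ n (t + 1) s' (fun τ => (pdis r π μ n (t + 1) s' τ) ^ 2)) := by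
    intro a s'
    have h1 : (fun τ => (pdis r π μ (n + 1) t s (Fin.cons (a, s') τ)) ^ 2)
        = fun τ => (π t s a / μ t s a * (r s a + pdis r π μ n (t + 1) s' τ)) ^ 2 := by
      funext τ; rw [pdis_cons r π μ n t s s' a τ]
    rw [h1, expTraj_sq_expand, expTraj_one p μ hp n (t + 1)
      (fun u hu1 hu2 s'' => hμ1 u (by omega) s''), mul_one, hub s']
  simp only [hstep]
  have bridge : ∀ a : A,
      ∑ s', p s a s' * ((r s a) ^ 2 + 2 * r s a * vval p r π n (t + 1) s'
          + expTraj p μ n (t + 1) s' (fun τ => (pdis r π μ n (t + 1) s' τ) ^ 2))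
      = rtilde p r π μ T t s a := by
    intro a
    have hsplit : ∑ s', p s a s' * ((r s a) ^ 2 + 2 * r s a * vval p r π n (t + 1) s'
          + expTraj p μ n (t + 1) s' (fun τ => (pdis r π μ n (t + 1) s' τ) ^ 2))
        = (r s a) ^ 2 * (∑ s', p s a s')
          + 2 * r s a * (∑ s', p s a s' * vval p r π n (t + 1) s')
          + ∑ s', p s a s' *
              expTraj p μ n (t + 1) s' (fun τ => (pdis r π μ n (t + 1) s' τ) ^ 2) := by
      rw [Finset.mul_sum, Finset.mul_sum, ← Finset.sum_add_distrib, ← Finset.sum_add_distrib]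
      exact Finset.sum_congr rfl fun s' _ => by ring
    rw [hsplit, (hp s a).2, mul_one]
    rcases Nat.eq_zero_or_pos n with h0 | hpos
    · subst h0
      have hT' : t + 1 = T := by omega
      rw [rtilde, if_pos hT']
      have hv : ∀ s' : S, vval p r π 0 (t + 1) s' = 0 := fun _ => rfl
      have hM : ∀ s' : S, expTraj p μ 0 (t + 1) s'
          (fun τ => (pdis r π μ 0 (t + 1) s' τ) ^ 2) = 0 := by
        intro s'; rw [expTraj_zero]; norm_num [pdis]
      simp [hv, hM]
    · have hT' : ¬ (t + 1 = T) := by omega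
      rw [rtilde, if_neg hT', htn]
      have hpv : ∀ s' : S, pdisVar p r π μ n (t + 1) s'
          = expTraj p μ n (t + 1) s' (fun τ => (pdis r π μ n (t + 1) s' τ) ^ 2)
            - (vval p r π n (t + 1) s') ^ 2 := by
        intro s'; rw [pdisVar, hub s']
      simp only [hpv, nuVar, qval]
      rw [Finset.sum_congr rfl (fun s' _ => mul_sub (p s a s') _ _), Finset.sum_sub_distrib]
      ring
  have keyA : ∀ a : A,
      ∑ s', μ t s a * p s a s' * ((π t s a / μ t s a) ^ 2 *
          ((r s a) ^ 2 + 2 * r s a * vval p r π n (t + 1) s'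
            + expTraj p μ n (t + 1) s' (fun τ => (pdis r π μ n (t + 1) s' τ) ^ 2)))
      = if 0 < μ t s a then
          (π t s a) ^ 2 * rtilde p r π μ T t s a / μ t s a else 0 := by
    intro a
    have expand : ∑ s', μ t s a * p s a s' * ((π t s a / μ t s a) ^ 2 *
          ((r s a) ^ 2 + 2 * r s a * vval p r π n (t + 1) s'
            + expTraj p μ n (t + 1) s' (fun τ => (pdis r π μ n (t + 1) s' τ) ^ 2)))
        = μ t s a * (π t s a / μ t s a) ^ 2 *
            ∑ s', p s a s' * ((r s a) ^ 2 + 2 * r s a * vval p r π n (t + 1) s'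
              + expTraj p μ n (t + 1) s' (fun τ => (pdis r π μ n (t + 1) s' τ) ^ 2)) := by
      rw [Finset.mul_sum]
      exact Finset.sum_congr rfl fun s' _ => by ring
    rw [expand, bridge a]
    rcases eq_or_ne (μ t s a) 0 with h0 | h0
    · rw [h0, if_neg (by norm_num)]; ring
    · rw [if_pos (lt_of_le_of_ne (hμ0 t htT s a) (Ne.symm h0))]
      field_simp
  rw [Finset.sum_congr rfl fun a _ => keyA a, stepObj, Finset.sum_filter]

lemma cost_bound (c : S → A → ℝ) (μstar : ℕ → S → A → ℝ) (T : ℕ) (ε : ℝ)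
    (hfeas : ∀ t, t < T → ∀ s, μstar t s ∈ stepFeasible p r c π μstar T ε t s) :
    ∀ n, n ≤ T → ∀ s : S,
      vval p c μstar n (T - n) s ≤ (1 + ε) * vval p c π n (T - n) s := by
  intro n hn s
  cases n with
  | zero =>
      show (0:ℝ) ≤ (1 + ε) * 0
      norm_num
  | succ n =>
      have htT : T - (n + 1) < T := by omega
      have htn : T - (T - (n + 1)) - 1 = n := by omega
      have htn' : T - (T - (n + 1)) = n + 1 := by omega
      have h := (hfeas (T - (n + 1)) htT s).2.2.2
      rw [htn, htn'] at h
      rw [vval_succ]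
      exact h

lemma pi_feasible (c : S → A → ℝ) (μstar : ℕ → S → A → ℝ) (T : ℕ) (ε : ℝ)
    (hp : ∀ s a, (∀ s', 0 ≤ p s a s') ∧ (∑ s', p s a s') = 1)
    (hπ : ∀ t s, (∀ a, 0 ≤ π t s a) ∧ (∑ a, π t s a) = 1)
    (hc : ∀ s a, 0 ≤ c s a) (hε : 0 ≤ ε)
    (hfeas : ∀ t, t < T → ∀ s, μstar t s ∈ stepFeasible p r c π μstar T ε t s) :
    ∀ t, t < T → ∀ s, π t s ∈ stepFeasible p r c π μstar T ε t s := by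
  intro t htT s
  refine ⟨(hπ t s).1, (hπ t s).2, fun a h0 => by rw [h0, zero_mul], ?_⟩
  have hq : ∀ a, qval p c μstar (T - t - 1) t s a ≤ (1 + ε) * qval p c π (T - t - 1) t s a := by
    intro a
    have hvb : ∀ s' : S, vval p c μstar (T - t - 1) (t + 1) s'
        ≤ (1 + ε) * vval p c π (T - t - 1) (t + 1) s' := by
      intro s'
      have := cost_bound p r π c μstar T ε hfeas (T - t - 1) (by omega) s'
      rwa [show T - (T - t - 1) = t + 1 by omega] at this
    have hsum : ∑ s', p s a s' * vval p c μstar (T - t - 1) (t + 1) s'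
        ≤ ∑ s', p s a s' * ((1 + ε) * vval p c π (T - t - 1) (t + 1) s') :=
      Finset.sum_le_sum fun s' _ =>
        mul_le_mul_of_nonneg_left (hvb s') ((hp s a).1 s')
    have hsum2 : ∑ s', p s a s' * ((1 + ε) * vval p c π (T - t - 1) (t + 1) s')
        = (1 + ε) * ∑ s', p s a s' * vval p c π (T - t - 1) (t + 1) s' := by
      rw [Finset.mul_sum]; exact Finset.sum_congr rfl fun s' _ => by ring
    show c s a + ∑ s', p s a s' * vval p c μstar (T - t - 1) (t + 1) s'
        ≤ (1 + ε) * (c s a + ∑ s', p s a s' * vval p c π (T - t - 1) (t + 1) s')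
    have hεc : 0 ≤ ε * c s a := mul_nonneg hε (hc s a)
    rw [hsum2] at hsum
    nlinarith [hsum]
  calc ∑ a, π t s a * qval p c μstar (T - t - 1) t s a
      ≤ ∑ a, π t s a * ((1 + ε) * qval p c π (T - t - 1) t s a) :=
        Finset.sum_le_sum fun a _ => mul_le_mul_of_nonneg_left (hq a) ((hπ t s).1 a)
    _ = (1 + ε) * ∑ a, π t s a * qval p c π (T - t - 1) t s a := by
        rw [Finset.mul_sum]; exact Finset.sum_congr rfl fun a _ => by ring
    _ = (1 + ε) * vval p c π (T - t) t s := by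
        congr 1
        conv_rhs => rw [show T - t = (T - t - 1) + 1 by omega, vval_succ]

lemma sq_mono (c : S → A → ℝ) (μstar : ℕ → S → A → ℝ) (T : ℕ) (ε : ℝ)
    (hp : ∀ s a, (∀ s', 0 ≤ p s a s') ∧ (∑ s', p s a s') = 1)
    (hπ : ∀ t s, (∀ a, 0 ≤ π t s a) ∧ (∑ a, π t s a) = 1)
    (hc : ∀ s a, 0 ≤ c s a) (hε : 0 ≤ ε)
    (hopt : ∀ t, t < T → ∀ s,
      μstar t s ∈ stepFeasible p r c π μstar T ε t s ∧
      ∀ ν ∈ stepFeasible p r c π μstar T ε t s,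
        stepObj p r π μstar T t s (μstar t s) ≤ stepObj p r π μstar T t s ν) :
    ∀ n, n ≤ T → ∀ s : S,
      expTraj p μstar n (T - n) s (fun τ => (pdis r π μstar n (T - n) s τ) ^ 2)
      ≤ expTraj p π n (T - n) s (fun τ => (pdis r π π n (T - n) s τ) ^ 2) := by
  have hfeas : ∀ t, t < T → ∀ s, μstar t s ∈ stepFeasible p r c π μstar T ε t s :=
    fun t ht s => (hopt t ht s).1
  have hμ0 : ∀ t, t < T → ∀ s a, 0 ≤ μstar t s a := fun t ht s => (hfeas t ht s).1
  have hμ1 : ∀ t, t < T → ∀ s, ∑ a, μstar t s a = 1 := fun t ht s => (hfeas t ht s).2.1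
  have hμcov : ∀ t, t < T → ∀ s a, μstar t s a = 0 →
      π t s a * qval p r π (T - t - 1) t s a = 0 := fun t ht s => (hfeas t ht s).2.2.1
  have hπ0 : ∀ t, t < T → ∀ s a, 0 ≤ π t s a := fun t _ s => (hπ t s).1
  have hπ1 : ∀ t, t < T → ∀ s, ∑ a, π t s a = 1 := fun t _ s => (hπ t s).2
  have hπcov : ∀ t, t < T → ∀ s a, π t s a = 0 →
      π t s a * qval p r π (T - t - 1) t s a = 0 :=
    fun t _ s a h0 => by rw [h0, zero_mul]
  intro n
  induction n with
  | zero =>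
      intro _ s
      rw [expTraj_zero, expTraj_zero]
      norm_num [pdis]
  | succ n ih =>
      intro hn s
      have htT : T - (n + 1) < T := by omega
      have ht1 : T - (n + 1) + 1 = T - n := by omega
      have htn : T - (T - (n + 1)) - 1 = n := by omega
      rw [expTraj_pdis_sq p r π μstar hp T hμ0 hμ1 hμcov n hn s,
        expTraj_pdis_sq p r π π hp T hπ0 hπ1 hπcov n hn s]
      set t := T - (n + 1) with htdef
      have step1 : stepObj p r π μstar T t s (μstar t s)
          ≤ stepObj p r π μstar T t s (π t s) :=
        (hopt t htT s).2 (π t s)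
          (pi_feasible p r π c μstar T ε hp hπ hc hε hfeas t htT s)
      refine le_trans step1 ?_
      rw [stepObj, stepObj]
      refine Finset.sum_le_sum fun a ha => ?_
      have hπa : 0 < π t s a := (Finset.mem_filter.mp ha).2
      have hrt : rtilde p r π μstar T t s a ≤ rtilde p r π π T t s a := by
        rw [rtilde, rtilde]
        rcases eq_or_ne (t + 1) T with hT' | hT'
        · rw [if_pos hT', if_pos hT']
        · rw [if_neg hT', if_neg hT']
          refine add_le_add le_rfl (Finset.sum_le_sum fun s' _ => ?_)
          refine mul_le_mul_of_nonneg_left ?_ ((hp s a).1 s')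
          rw [pdisVar, pdisVar, htn]
          have hubμ : expTraj p μstar n (t + 1) s' (pdis r π μstar n (t + 1) s')
              = vval p r π n (t + 1) s' := by
            rw [ht1]
            exact expTraj_pdis p r π μstar hp T hμ1 hμcov n (by omega) s'
          have hubπ : expTraj p π n (t + 1) s' (pdis r π π n (t + 1) s')
              = vval p r π n (t + 1) s' := by
            rw [ht1]
            exact expTraj_pdis p r π π hp T hπ1 hπcov n (by omega) s'
          rw [hubμ, hubπ]
          have hM := ih (by omega) s'
          rw [← ht1] at hM
          exact sub_le_sub_right hM _
      have h2 : (0:ℝ) ≤ (π t s a) ^ 2 := sq_nonneg _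
      exact (div_le_div_iff_of_pos_right hπa).mpr (mul_le_mul_of_nonneg_left hrt h2)

end Proofs


/-- **Total variance reduction of the safety-constrained optimal behavior policy.**
In the constrained MDP, fix a safety parameter `ε ≥ 0` and let `μ*` be the behavior
policy defined backward in time as the step-wise optimal solution of the constrained
problem at each `t` and `s`. Then for every initial state distribution `p0` on `S`,
`Var(G^PDIS(τ^{μ*_{0:T−1}})) ≤ Var(G^PDIS(τ^{π_{0:T−1}}))`, where both variances
include the randomness of `S_0 ∼ p0` and of the respective trajectory distributions. -/
theorem total_variance_reduction
    {S A : Type} [Fintype S] [Fintype A]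
    (T : ℕ) (hT : 1 ≤ T)
    (p : S → A → S → ℝ) (r c : S → A → ℝ) (π μstar : ℕ → S → A → ℝ)
    (hp : ∀ s a, (∀ s', 0 ≤ p s a s') ∧ (∑ s', p s a s') = 1)
    (hπ : ∀ t s, (∀ a, 0 ≤ π t s a) ∧ (∑ a, π t s a) = 1)
    (hc : ∀ s a, 0 ≤ c s a)
    (ε : ℝ) (hε : 0 ≤ ε)
    (hopt : ∀ t, t < T → ∀ s,
      μstar t s ∈ stepFeasible p r c π μstar T ε t s ∧
      ∀ ν ∈ stepFeasible p r c π μstar T ε t s,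
        stepObj p r π μstar T t s (μstar t s) ≤ stepObj p r π μstar T t s ν)
    (p0 : S → ℝ) (hp0 : (∀ s, 0 ≤ p0 s) ∧ (∑ s, p0 s) = 1) :
    pdisTotalVar p r π μstar p0 T ≤ pdisTotalVar p r π π p0 T := by
  have hfeas : ∀ t, t < T → ∀ s, μstar t s ∈ stepFeasible p r c π μstar T ε t s :=
    fun t ht s => (hopt t ht s).1
  have hμ1 : ∀ t, t < T → ∀ s, ∑ a, μstar t s a = 1 := fun t ht s => (hfeas t ht s).2.1
  have hμcov : ∀ t, t < T → ∀ s a, μstar t s a = 0 →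
      π t s a * qval p r π (T - t - 1) t s a = 0 := fun t ht s => (hfeas t ht s).2.2.1
  have hπ1 : ∀ t, t < T → ∀ s, ∑ a, π t s a = 1 := fun t _ s => (hπ t s).2
  have hπcov : ∀ t, t < T → ∀ s a, π t s a = 0 →
      π t s a * qval p r π (T - t - 1) t s a = 0 :=
    fun t _ s a h0 => by rw [h0, zero_mul]
  have hmeanμ : ∀ s : S, expTraj p μstar T 0 s (pdis r π μstar T 0 s)
      = vval p r π T 0 s := by
    intro s
    have := expTraj_pdis p r π μstar hp T hμ1 hμcov T le_rfl s
    rwa [Nat.sub_self] at this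
  have hmeanπ : ∀ s : S, expTraj p π T 0 s (pdis r π π T 0 s)
      = vval p r π T 0 s := by
    intro s
    have := expTraj_pdis p r π π hp T hπ1 hπcov T le_rfl s
    rwa [Nat.sub_self] at this
  have hM : ∀ s : S, expTraj p μstar T 0 s (fun τ => (pdis r π μstar T 0 s τ) ^ 2)
      ≤ expTraj p π T 0 s (fun τ => (pdis r π π T 0 s τ) ^ 2) := by
    intro s
    have := sq_mono p r π c μstar T ε hp hπ hc hε hopt T le_rfl s
    rwa [Nat.sub_self] at this
  rw [pdisTotalVar, pdisTotalVar]
  have hBs : (∑ s, p0 s * expTraj p μstar T 0 s (pdis r π μstar T 0 s))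
      = ∑ s, p0 s * expTraj p π T 0 s (pdis r π π T 0 s) :=
    Finset.sum_congr rfl fun s _ => by rw [hmeanμ s, hmeanπ s]
  rw [hBs]
  exact sub_le_sub_right
    (Finset.sum_le_sum fun s _ => mul_le_mul_of_nonneg_left (hM s) (hp0.1 s)) _
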